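/- The autonomous domination number of a disjoint union of two graphs is the sum of their autonomous domination numbers. -/

import Mathlib

open SimpleGraph

variable {V : Type*} [DecidableEq V]

/-- `S` is a dominating set of `G`. -/
def Dominates (G : SimpleGraph V) (S : Finset V) : Prop :=
  ∀ v : V, v ∈ S ∨ ∃ u ∈ S, G.Adj u v

/-- Dominating sets `S` and `S'` are adjacent: they differ by moving one
guard along an edge of `G`. -/
def AdjacentSets (G : SimpleGraph V) (S S' : Finset V) : Prop :=
  ∃ v v', v ∈ S ∧ v' ∉ S ∧ G.Adj v v' ∧ S' = insert v' (S.erase v)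

/-- `S` is a secure dominating set. -/
def SecureDominating (G : SimpleGraph V) (S : Finset V) : Prop :=
  Dominates G S ∧ ∀ v ∉ S, ∃ S', Dominates G S' ∧ AdjacentSets G S S' ∧ v ∈ S'

/-- An autonomously dominating family. -/
def AutFamily (G : SimpleGraph V) (F : Set (Finset V)) : Prop :=
  (∀ S ∈ F, Dominates G S) ∧
  (∀ S ∈ F, ∀ v ∉ S, ∃ S' ∈ F, AdjacentSets G S S' ∧ v ∈ S') ∧
  (∀ S ∈ F, ∀ S', Dominates G S' → AdjacentSets G S S' → S' ∈ F)

/-- An autonomously dominating set. -/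
def AutDomSet (G : SimpleGraph V) (S : Finset V) : Prop :=
  ∃ F, AutFamily G F ∧ S ∈ F

/-- The autonomous domination number. -/
noncomputable def autDomNum (G : SimpleGraph V) : ℕ :=
  sInf {k | ∃ S : Finset V, AutDomSet G S ∧ S.card = k}

/-- An eternally dominating family (no closure condition). -/
def EternalFamily (G : SimpleGraph V) (F : Set (Finset V)) : Prop :=
  (∀ S ∈ F, Dominates G S) ∧
  (∀ S ∈ F, ∀ v ∉ S, ∃ S' ∈ F, AdjacentSets G S S' ∧ v ∈ S')

/-- The eternal domination number. -/
noncomputable def eternalDomNum (G : SimpleGraph V) : ℕ :=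
  sInf {k | ∃ (F : Set (Finset V)) (S : Finset V),
    EternalFamily G F ∧ S ∈ F ∧ S.card = k}

/-- The domination number. -/
noncomputable def domNum (G : SimpleGraph V) : ℕ :=
  sInf {k | ∃ S : Finset V, Dominates G S ∧ S.card = k}

/-- The disjoint union of two simple graphs. -/
def disjUnionGraph {α β : Type*} (G : SimpleGraph α) (H : SimpleGraph β) :
    SimpleGraph (α ⊕ β) where
  Adj x y := match x, y with
    | .inl a, .inl b => G.Adj a b
    | .inr a, .inr b => H.Adj a b
    | _, _ => False
  symm := by constructor; rintro (a | a) (b | b) h <;> simp_all [SimpleGraph.adj_comm]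
  loopless := by constructor; rintro (a | a) h <;> simp_all

section Aux

open Sum Finset

variable {α β : Type*} [DecidableEq α] [DecidableEq β]
variable {G : SimpleGraph α} {H : SimpleGraph β}

@[simp] lemma disjAdj_inl_inl {a b : α} :
    (disjUnionGraph G H).Adj (inl a) (inl b) ↔ G.Adj a b := Iff.rfl

@[simp] lemma disjAdj_inr_inr {a b : β} :
    (disjUnionGraph G H).Adj (inr a) (inr b) ↔ H.Adj a b := Iff.rfl

@[simp] lemma disjAdj_inl_inr {a : α} {b : β} :
    ¬ (disjUnionGraph G H).Adj (inl a) (inr b) := fun h => h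

@[simp] lemma disjAdj_inr_inl {a : β} {b : α} :
    ¬ (disjUnionGraph G H).Adj (inr a) (inl b) := fun h => h

lemma toLeft_erase_inl (S : Finset (α ⊕ β)) (a : α) :
    (S.erase (inl a)).toLeft = S.toLeft.erase a := by
  ext x; simp

lemma toRight_erase_inl (S : Finset (α ⊕ β)) (a : α) :
    (S.erase (inl a)).toRight = S.toRight := by
  ext x; simp

lemma toLeft_erase_inr (S : Finset (α ⊕ β)) (b : β) :
    (S.erase (inr b)).toLeft = S.toLeft := by
  ext x; simp

lemma toRight_erase_inr (S : Finset (α ⊕ β)) (b : β) :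
    (S.erase (inr b)).toRight = S.toRight.erase b := by
  ext x; simp

lemma dominates_disjUnion_iff {S : Finset (α ⊕ β)} :
    Dominates (disjUnionGraph G H) S ↔ Dominates G S.toLeft ∧ Dominates H S.toRight := by
  constructor
  · intro h
    constructor
    · intro v
      rcases h (inl v) with hv | ⟨u, hu, hadj⟩
      · exact Or.inl (Finset.mem_toLeft.2 hv)
      · cases u with
        | inl a => exact Or.inr ⟨a, Finset.mem_toLeft.2 hu, hadj⟩
        | inr b => exact absurd hadj (disjAdj_inr_inl)
    · intro v
      rcases h (inr v) with hv | ⟨u, hu, hadj⟩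
      · exact Or.inl (Finset.mem_toRight.2 hv)
      · cases u with
        | inl a => exact absurd hadj (disjAdj_inl_inr)
        | inr b => exact Or.inr ⟨b, Finset.mem_toRight.2 hu, hadj⟩
  · rintro ⟨h1, h2⟩ v
    cases v with
    | inl a =>
      rcases h1 a with ha | ⟨u, hu, hadj⟩
      · exact Or.inl (Finset.mem_toLeft.1 ha)
      · exact Or.inr ⟨inl u, Finset.mem_toLeft.1 hu, hadj⟩
    | inr b =>
      rcases h2 b with hb | ⟨u, hu, hadj⟩
      · exact Or.inl (Finset.mem_toRight.1 hb)
      · exact Or.inr ⟨inr u, Finset.mem_toRight.1 hu, hadj⟩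

lemma adjacentSets_disjUnion {S S' : Finset (α ⊕ β)}
    (h : AdjacentSets (disjUnionGraph G H) S S') :
    (AdjacentSets G S.toLeft S'.toLeft ∧ S'.toRight = S.toRight) ∨
    (AdjacentSets H S.toRight S'.toRight ∧ S'.toLeft = S.toLeft) := by
  obtain ⟨v, v', hv, hv', hadj, hS'⟩ := h
  cases v with
  | inl a =>
    cases v' with
    | inl a' =>
      subst hS'
      refine Or.inl ⟨⟨a, a', Finset.mem_toLeft.2 hv,
        fun h => hv' (Finset.mem_toLeft.1 h), hadj, ?_⟩, ?_⟩
      · simp [toLeft_erase_inl]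
      · simp [toRight_erase_inl]
    | inr b' => exact absurd hadj disjAdj_inl_inr
  | inr b =>
    cases v' with
    | inl a' => exact absurd hadj disjAdj_inr_inl
    | inr b' =>
      subst hS'
      refine Or.inr ⟨⟨b, b', Finset.mem_toRight.2 hv,
        fun h => hv' (Finset.mem_toRight.1 h), hadj, ?_⟩, ?_⟩
      · simp [toRight_erase_inr]
      · simp [toLeft_erase_inr]

lemma lift_left {S : Finset (α ⊕ β)} {A' : Finset α}
    (h : AdjacentSets G S.toLeft A') :
    ∃ S', AdjacentSets (disjUnionGraph G H) S S' ∧ S'.toLeft = A' ∧ S'.toRight = S.toRight := by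
  obtain ⟨a, a', ha, ha', hadj, hA'⟩ := h
  refine ⟨insert (inl a') (S.erase (inl a)),
    ⟨inl a, inl a', Finset.mem_toLeft.1 ha, fun h => ha' (Finset.mem_toLeft.2 h), hadj, rfl⟩,
    ?_, ?_⟩
  · simp [toLeft_erase_inl, hA']
  · simp [toRight_erase_inl]

lemma lift_right {S : Finset (α ⊕ β)} {B' : Finset β}
    (h : AdjacentSets H S.toRight B') :
    ∃ S', AdjacentSets (disjUnionGraph G H) S S' ∧ S'.toLeft = S.toLeft ∧ S'.toRight = B' := by
  obtain ⟨b, b', hb, hb', hadj, hB'⟩ := h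
  refine ⟨insert (inr b') (S.erase (inr b)),
    ⟨inr b, inr b', Finset.mem_toRight.1 hb, fun h => hb' (Finset.mem_toRight.2 h), hadj, rfl⟩,
    ?_, ?_⟩
  · simp [toLeft_erase_inr]
  · simp [toRight_erase_inr, hB']

lemma autDomSet_toLeft {S : Finset (α ⊕ β)}
    (h : AutDomSet (disjUnionGraph G H) S) : AutDomSet G S.toLeft := by
  obtain ⟨F, ⟨hdom, hmove, hclose⟩, hS⟩ := h
  refine ⟨Finset.toLeft '' F, ⟨?_, ?_, ?_⟩, ⟨S, hS, rfl⟩⟩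
  · rintro A ⟨T, hT, rfl⟩
    exact (dominates_disjUnion_iff.1 (hdom T hT)).1
  · rintro A ⟨T, hT, rfl⟩ v hv
    obtain ⟨T', hT', hadj, hvT'⟩ := hmove T hT (inl v) (fun hc => hv (Finset.mem_toLeft.2 hc))
    rcases adjacentSets_disjUnion hadj with ⟨hl, _⟩ | ⟨_, hl⟩
    · exact ⟨T'.toLeft, ⟨T', hT', rfl⟩, hl, Finset.mem_toLeft.2 hvT'⟩
    · exact absurd (hl ▸ Finset.mem_toLeft.2 hvT') hv
  · rintro A ⟨T, hT, rfl⟩ A' hdom' hadj'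
    obtain ⟨T', hTT', hT'l, hT'r⟩ := lift_left (H := H) hadj'
    have hdT' : Dominates (disjUnionGraph G H) T' := by
      rw [dominates_disjUnion_iff]
      exact ⟨hT'l ▸ hdom', hT'r ▸ (dominates_disjUnion_iff.1 (hdom T hT)).2⟩
    exact ⟨T', hclose T hT T' hdT' hTT', hT'l⟩

lemma autDomSet_toRight {S : Finset (α ⊕ β)}
    (h : AutDomSet (disjUnionGraph G H) S) : AutDomSet H S.toRight := by
  obtain ⟨F, ⟨hdom, hmove, hclose⟩, hS⟩ := h
  refine ⟨Finset.toRight '' F, ⟨?_, ?_, ?_⟩, ⟨S, hS, rfl⟩⟩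
  · rintro B ⟨T, hT, rfl⟩
    exact (dominates_disjUnion_iff.1 (hdom T hT)).2
  · rintro B ⟨T, hT, rfl⟩ v hv
    obtain ⟨T', hT', hadj, hvT'⟩ := hmove T hT (inr v) (fun hc => hv (Finset.mem_toRight.2 hc))
    rcases adjacentSets_disjUnion hadj with ⟨_, hr⟩ | ⟨hr', _⟩
    · exact absurd (hr ▸ Finset.mem_toRight.2 hvT') hv
    · exact ⟨T'.toRight, ⟨T', hT', rfl⟩, hr', Finset.mem_toRight.2 hvT'⟩
  · rintro B ⟨T, hT, rfl⟩ B' hdom' hadj'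
    obtain ⟨T', hTT', hT'l, hT'r⟩ := lift_right (G := G) hadj'
    have hdT' : Dominates (disjUnionGraph G H) T' := by
      rw [dominates_disjUnion_iff]
      exact ⟨hT'l ▸ (dominates_disjUnion_iff.1 (hdom T hT)).1, hT'r ▸ hdom'⟩
    exact ⟨T', hclose T hT T' hdT' hTT', hT'r⟩

lemma autDomSet_disjSum {A : Finset α} {B : Finset β}
    (hA : AutDomSet G A) (hB : AutDomSet H B) :
    AutDomSet (disjUnionGraph G H) (A.disjSum B) := by
  obtain ⟨F₁, ⟨hd1, hm1, hc1⟩, hA1⟩ := hA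
  obtain ⟨F₂, ⟨hd2, hm2, hc2⟩, hB2⟩ := hB
  refine ⟨{T | T.toLeft ∈ F₁ ∧ T.toRight ∈ F₂}, ⟨?_, ?_, ?_⟩,
    ⟨by simpa using hA1, by simpa using hB2⟩⟩
  · rintro T ⟨h1, h2⟩
    exact dominates_disjUnion_iff.2 ⟨hd1 _ h1, hd2 _ h2⟩
  · rintro T ⟨h1, h2⟩ v hv
    cases v with
    | inl a =>
      obtain ⟨A', hA', hadj, haA'⟩ := hm1 _ h1 a (fun hc => hv (Finset.mem_toLeft.1 hc))
      obtain ⟨T', hTT', hl, hr⟩ := lift_left (H := H) hadj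
      exact ⟨T', ⟨hl ▸ hA', hr ▸ h2⟩, hTT',
        Finset.mem_toLeft.1 (by rw [hl]; exact haA')⟩
    | inr b =>
      obtain ⟨B', hB', hadj, hbB'⟩ := hm2 _ h2 b (fun hc => hv (Finset.mem_toRight.1 hc))
      obtain ⟨T', hTT', hl, hr⟩ := lift_right (G := G) hadj
      exact ⟨T', ⟨hl ▸ h1, hr ▸ hB'⟩, hTT',
        Finset.mem_toRight.1 (by rw [hr]; exact hbB')⟩
  · rintro T ⟨h1, h2⟩ T' hdom' hadj'
    rcases adjacentSets_disjUnion hadj' with ⟨hl, hr⟩ | ⟨hr', hl⟩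
    · exact ⟨hc1 _ h1 _ (dominates_disjUnion_iff.1 hdom').1 hl, hr ▸ h2⟩
    · exact ⟨hl ▸ h1, hc2 _ h2 _ (dominates_disjUnion_iff.1 hdom').2 hr'⟩

lemma autDomSet_univ {V : Type*} [DecidableEq V] [Fintype V] (G : SimpleGraph V) :
    AutDomSet G Finset.univ := by
  refine ⟨{Finset.univ}, ⟨?_, ?_, ?_⟩, rfl⟩
  · intro S hS
    rw [Set.mem_singleton_iff] at hS; subst hS
    exact fun v => Or.inl (Finset.mem_univ v)
  · intro S hS v hv
    rw [Set.mem_singleton_iff] at hS; subst hS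
    exact absurd (Finset.mem_univ v) hv
  · rintro S hS S' _ ⟨v, v', _, hv', _, _⟩
    rw [Set.mem_singleton_iff] at hS; subst hS
    exact absurd (Finset.mem_univ v') hv'

end Aux

/-- the autonomous domination number of a disjoint union is the sum of
the autonomous domination numbers. -/
theorem autDomNum_disjUnion {α β : Type*} [DecidableEq α] [DecidableEq β]
    [Fintype α] [Fintype β] (G : SimpleGraph α) (H : SimpleGraph β) :
    autDomNum (disjUnionGraph G H) = autDomNum G + autDomNum H := by
  have hne1 : {k | ∃ S : Finset α, AutDomSet G S ∧ S.card = k}.Nonempty :=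
    ⟨_, Finset.univ, autDomSet_univ G, rfl⟩
  have hne2 : {k | ∃ S : Finset β, AutDomSet H S ∧ S.card = k}.Nonempty :=
    ⟨_, Finset.univ, autDomSet_univ H, rfl⟩
  have hne0 : {k | ∃ S : Finset (α ⊕ β), AutDomSet (disjUnionGraph G H) S ∧ S.card = k}.Nonempty :=
    ⟨_, Finset.univ, autDomSet_univ _, rfl⟩
  obtain ⟨A, hA, hAc⟩ := Nat.sInf_mem hne1
  obtain ⟨B, hB, hBc⟩ := Nat.sInf_mem hne2
  obtain ⟨S, hS, hSc⟩ := Nat.sInf_mem hne0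
  unfold autDomNum
  apply le_antisymm
  · exact Nat.sInf_le ⟨A.disjSum B, autDomSet_disjSum hA hB,
      by rw [Finset.card_disjSum, hAc, hBc]⟩
  · have h1 : sInf {k | ∃ S : Finset α, AutDomSet G S ∧ S.card = k} ≤ S.toLeft.card :=
      Nat.sInf_le ⟨S.toLeft, autDomSet_toLeft hS, rfl⟩
    have h2 : sInf {k | ∃ S : Finset β, AutDomSet H S ∧ S.card = k} ≤ S.toRight.card :=
      Nat.sInf_le ⟨S.toRight, autDomSet_toRight hS, rfl⟩
    calc sInf {k | ∃ S : Finset α, AutDomSet G S ∧ S.card = k}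
          + sInf {k | ∃ S : Finset β, AutDomSet H S ∧ S.card = k}
        ≤ S.toLeft.card + S.toRight.card := Nat.add_le_add h1 h2
      _ = S.card := Finset.card_toLeft_add_card_toRight
      _ = _ := hSc
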